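/- Let Ω ⊆ ℝ^d be a nonempty open set, let ω : Ω → 𝕂 and ψ : Ω → Ω be continuous, and suppose the weighted composition operator C_{ω,ψ} is supercyclic on C(Ω, 𝕂) with the compact-open topology. Then ψ is injective. -/
import Mathlib

private lemma stmt_2_aux {𝕂 : Type*} [Field 𝕂] {p q x y : 𝕂}
    (hx : p * x + q = 0) (hy : p * y + q = 0) (hxy : x ≠ y) : p = 0 ∧ q = 0 := by
  have hp : p * (x - y) = 0 := by linear_combination hx - hy
  have hp0 : p = 0 := by
    rcases mul_eq_zero.mp hp with h | h
    · exact h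
    · exact absurd (sub_eq_zero.mp h) hxy
  refine ⟨hp0, ?_⟩
  have := hx
  rw [hp0] at this
  simpa using this

private lemma stmt_2_pick {𝕂 : Type*} [Field 𝕂] [CharZero 𝕂] {p₁ q₁ p₂ q₂ : 𝕂}
    (h1 : ¬(p₁ = 0 ∧ q₁ = 0)) (h2 : ¬(p₂ = 0 ∧ q₂ = 0)) :
    ∃ t : 𝕂, p₁ * t + q₁ ≠ 0 ∧ p₂ * t + q₂ ≠ 0 := by
  by_contra hall
  push_neg at hall
  have hall' : ∀ t : 𝕂, p₁ * t + q₁ = 0 ∨ p₂ * t + q₂ = 0 := by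
    intro t
    by_cases h : p₁ * t + q₁ = 0
    · exact Or.inl h
    · exact Or.inr (hall t h)
  have e01 : (0:𝕂) ≠ 1 := by norm_num
  have e02 : (0:𝕂) ≠ 2 := by norm_num
  have e12 : (1:𝕂) ≠ 2 := by norm_num
  rcases hall' 0 with a0 | b0 <;> rcases hall' 1 with a1 | b1 <;>
      rcases hall' 2 with a2 | b2 <;>
    first
    | exact h1 (stmt_2_aux a0 a1 e01)
    | exact h1 (stmt_2_aux a0 a2 e02)
    | exact h1 (stmt_2_aux a1 a2 e12)
    | exact h2 (stmt_2_aux b0 b1 e01)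
    | exact h2 (stmt_2_aux b0 b2 e02)
    | exact h2 (stmt_2_aux b1 b2 e12)

theorem stmt_2 {𝕂 : Type*} [RCLike 𝕂] {d : ℕ} (Ω : Set (Fin d → ℝ))
    (hΩ : IsOpen Ω) (hne : Ω.Nonempty)
    (ω : C(↥Ω, 𝕂)) (ψ : C(↥Ω, ↥Ω))
    (hsc : ∃ g : C(↥Ω, 𝕂), Dense {h : C(↥Ω, 𝕂) |
      ∃ (c : 𝕂) (n : ℕ), c • (fun f : C(↥Ω, 𝕂) => ω * f.comp ψ)^[n] g = h}) :
    Function.Injective ⇑ψ := by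
  obtain ⟨g, hg⟩ := hsc
  intro a b hab
  by_contra hne2
  -- a functional killing the line 𝕂 • g (in coordinates (h a, h b))
  obtain ⟨p₁, q₁, h1ne, h1⟩ :
      ∃ p q : 𝕂, ¬(p = 0 ∧ q = 0) ∧ ∀ c : 𝕂, p * (c * g a) + q * (c * g b) = 0 := by
    by_cases hga : g a = 0
    · exact ⟨1, 0, by simp, fun c => by simp [hga]⟩
    · exact ⟨g b, -(g a), fun h => hga (neg_eq_zero.mp h.2), fun c => by ring⟩
  -- a functional killing the range of T (in coordinates (h a, h b))
  obtain ⟨p₂, q₂, h2ne, h2⟩ :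
      ∃ p q : 𝕂, ¬(p = 0 ∧ q = 0) ∧
        ∀ c u : 𝕂, p * (c * (ω a * u)) + q * (c * (ω b * u)) = 0 := by
    by_cases hwa : ω a = 0
    · exact ⟨1, 0, by simp, fun c u => by simp [hwa]⟩
    · exact ⟨ω b, -(ω a), fun h => hwa (neg_eq_zero.mp h.2), fun c u => by ring⟩
  obtain ⟨t, ht1, ht2⟩ := stmt_2_pick h1ne h2ne
  -- a continuous function with value t at a and 1 at b
  have hdab : dist a b ≠ 0 := dist_ne_zero.mpr hne2
  set r : ↥Ω → ℝ := fun z => dist z b / dist a b with hr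
  have hrc : Continuous r := (Continuous.dist continuous_id continuous_const).div_const _
  set h₀ : C(↥Ω, 𝕂) :=
    ⟨fun z => ((1 - r z : ℝ) : 𝕂) + t * ((r z : ℝ) : 𝕂), by fun_prop⟩ with hh₀def
  have hra : r a = 1 := div_self hdab
  have hrb : r b = 0 := by simp [hr]
  have hh₀a : h₀ a = t := by simp [hh₀def, hra]
  have hh₀b : h₀ b = 1 := by simp [hh₀def, hrb]
  -- the open set avoided by the orbit
  set V : Set C(↥Ω, 𝕂) :=
    {h | p₁ * h a + q₁ * h b ≠ 0 ∧ p₂ * h a + q₂ * h b ≠ 0} with hV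
  have hVopen : IsOpen V := by
    have hc : ∀ (p q : 𝕂), Continuous fun h : C(↥Ω, 𝕂) => p * h a + q * h b := by
      intro p q
      exact ((continuous_const.mul (continuous_eval_const a)).add
        (continuous_const.mul (continuous_eval_const b)))
    exact (isOpen_compl_singleton.preimage (hc p₁ q₁)).inter
      (isOpen_compl_singleton.preimage (hc p₂ q₂))
  have hVne : V.Nonempty := by
    refine ⟨h₀, ?_, ?_⟩ <;> simp only [hh₀a, hh₀b, mul_one]
    · exact ht1
    · exact ht2
  obtain ⟨h, hhorb, hhV⟩ := hg.exists_mem_open hVopen hVne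
  obtain ⟨c, n, hcn⟩ := hhorb
  cases n with
  | zero =>
    have ha : h a = c * g a := by
      rw [← hcn]; simp
    have hb : h b = c * g b := by
      rw [← hcn]; simp
    exact hhV.1 (by rw [ha, hb]; exact h1 c)
  | succ m =>
    set f : C(↥Ω, 𝕂) := (fun f : C(↥Ω, 𝕂) => ω * f.comp ψ)^[m] g with hf
    have hit : (fun f : C(↥Ω, 𝕂) => ω * f.comp ψ)^[m + 1] g = ω * f.comp ψ := by
      rw [Function.iterate_succ_apply']
    have ha : h a = c * (ω a * f (ψ a)) := by
      rw [← hcn, hit]; simp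
    have hb : h b = c * (ω b * f (ψ a)) := by
      rw [← hcn, hit]; simp [hab]
    exact hhV.2 (by rw [ha, hb]; exact h2 c (f (ψ a)))
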